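/- (Part of Theorem 1, P3: upper threshold η_U) Fix λ > 0 and β ∈ (0,1); let x*_λ ∈ (0,1) be the unique point with g'(x*_λ) = λ, set z_λ(x) := g(x) − λx and m := min{x*_λ, β}, and define W(w) := −g(w) + w·g'(w) + z_λ(m) for w ∈ (0,1). Then W is strictly decreasing on (0,1), and: if x*_λ ≤ β then W(x*_λ) = 0, so η_U := x*_λ is the unique zero of W; if x*_λ > β then W(β) > 0 and W(x*_λ) < 0, so W has a unique zero η_U ∈ (β, x*_λ). In either case η_U ∈ [min{β, x*_λ}, x*_λ]. -/

import Mathlib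

open Set Filter Topology

/-- Theorem 1, P3 (upper threshold `η_U`): the function
`W(w) = −g(w) + w g'(w) + z_λ(min{x*_λ, β})` is strictly decreasing on `(0,1)`;
if `x*_λ ≤ β` its unique zero is `x*_λ`, and if `x*_λ > β` it has a unique zero in
`(β, x*_λ)`; in either case the zero lies in `[min{β, x*_λ}, x*_λ]`. -/
theorem upper_threshold_etaU
    (g g' : ℝ → ℝ)
    (hg_cont : ContinuousOn g (Icc 0 1))
    (hg_mono : StrictMonoOn g (Icc 0 1))
    (hg_conc : StrictConcaveOn ℝ (Icc 0 1) g)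
    (hg_deriv : ∀ x ∈ Ioo (0:ℝ) 1, HasDerivAt g (g' x) x)
    (hg'_cont : ContinuousOn g' (Ioo 0 1))
    (hg0 : g 0 = 0)
    (hg'0 : Tendsto g' (𝓝[>] (0:ℝ)) atTop)
    (hg'1 : Tendsto g' (𝓝[<] (1:ℝ)) (𝓝 0))
    (lam : ℝ) (hlam : 0 < lam)
    (β : ℝ) (hβ : β ∈ Ioo (0:ℝ) 1)
    (xstar : ℝ) (hx_mem : xstar ∈ Ioo (0:ℝ) 1) (hx_eq : g' xstar = lam)
    (W : ℝ → ℝ)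
    (hW : ∀ w, W w = -g w + w * g' w +
      (g (min xstar β) - lam * min xstar β)) :
    StrictAntiOn W (Ioo 0 1) ∧
    (xstar ≤ β → W xstar = 0 ∧ (∀ w ∈ Ioo (0:ℝ) 1, W w = 0 → w = xstar)) ∧
    (β < xstar → 0 < W β ∧ W xstar < 0 ∧
      ∃ ηU ∈ Ioo β xstar, W ηU = 0 ∧ (∀ w ∈ Ioo β xstar, W w = 0 → w = ηU)) ∧
    (∃ ηU ∈ Icc (min β xstar) xstar, W ηU = 0) := by
  have hsub : Ioo (0:ℝ) 1 ⊆ Icc (0:ℝ) 1 := Ioo_subset_Icc_self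
  -- key slope inequalities
  have hkey : ∀ a ∈ Ioo (0:ℝ) 1, ∀ b ∈ Ioo (0:ℝ) 1, a < b →
      g' b < (g b - g a) / (b - a) ∧ (g b - g a) / (b - a) < g' a := by
    intro a ha b hb hab
    constructor
    · have := hg_conc.lt_slope_of_hasDerivAt (hsub ha) (hsub hb) hab (hg_deriv b hb)
      simpa [slope_def_field, div_eq_div_iff] using this
    · have := hg_conc.slope_lt_of_hasDerivAt (hsub ha) (hsub hb) hab (hg_deriv a ha)
      simpa [slope_def_field, div_eq_div_iff] using this
  have hanti : StrictAntiOn W (Ioo 0 1) := by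
    intro a ha b hb hab
    obtain ⟨h1, h2⟩ := hkey a ha b hb hab
    set s := (g b - g a) / (b - a) with hs
    have hba : (0:ℝ) < b - a := sub_pos.2 hab
    have hgs : g b - g a = s * (b - a) := by rw [hs, div_mul_cancel₀ _ hba.ne']
    have h3 : b * g' b < b * s := mul_lt_mul_of_pos_left h1 (lt_trans ha.1 hab)
    have h4 : a * s < a * g' a := mul_lt_mul_of_pos_left h2 ha.1
    rw [hW a, hW b]
    nlinarith [hgs]
  have hginj := hanti.injOn
  refine ⟨hanti, ?_, ?_, ?_⟩
  · -- case xstar ≤ β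
    intro hle
    have hmin : min xstar β = xstar := min_eq_left hle
    have hWx : W xstar = 0 := by rw [hW]; rw [hmin, hx_eq]; ring
    exact ⟨hWx, fun w hw hw0 => hginj hw hx_mem (by rw [hw0, hWx])⟩
  · -- case β < xstar
    intro hlt
    have hmin : min xstar β = β := min_eq_right hlt.le
    obtain ⟨h1, h2⟩ := hkey β hβ xstar hx_mem hlt
    have hba : (0:ℝ) < xstar - β := sub_pos.2 hlt
    set s := (g xstar - g β) / (xstar - β) with hs
    have hgs : g xstar - g β = s * (xstar - β) := by rw [hs, div_mul_cancel₀ _ hba.ne']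
    have hWβ : 0 < W β := by
      rw [hW, hmin]
      have : lam < g' β := by rw [← hx_eq]; linarith
      nlinarith [hβ.1]
    have hWx : W xstar < 0 := by
      rw [hW, hmin, hx_eq]
      have : lam < s := by rw [← hx_eq]; linarith
      nlinarith
    refine ⟨hWβ, hWx, ?_⟩
    -- continuity of W on [β, xstar]
    have hIcc : Icc β xstar ⊆ Ioo (0:ℝ) 1 := fun y hy =>
      ⟨lt_of_lt_of_le hβ.1 hy.1, lt_of_le_of_lt hy.2 hx_mem.2⟩
    have hWc : ContinuousOn W (Icc β xstar) := by
      have : ContinuousOn (fun w => -g w + w * g' w +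
          (g (min xstar β) - lam * min xstar β)) (Icc β xstar) :=
        (((hg_cont.mono (fun y hy => hsub (hIcc hy))).neg).add
          (continuousOn_id.mul (hg'_cont.mono hIcc))).add continuousOn_const
      exact this.congr fun y _ => hW y
    have h0mem : (0:ℝ) ∈ Icc (W xstar) (W β) := ⟨hWx.le, hWβ.le⟩
    obtain ⟨c, hc, hc0⟩ := intermediate_value_Icc' hlt.le hWc h0mem
    have hcIoo : c ∈ Ioo β xstar := by
      rcases hc.1.lt_or_eq with h | h
      · rcases hc.2.lt_or_eq with h' | h'
        · exact ⟨h, h'⟩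
        · exact absurd (h' ▸ hc0) (by simp [hWx.ne])
      · exact absurd (h ▸ hc0) (by simp [hWβ.ne'])
    refine ⟨c, hcIoo, hc0, fun w hw hw0 => ?_⟩
    exact hginj (hIcc (Ioo_subset_Icc_self hw)) (hIcc (Ioo_subset_Icc_self hcIoo))
      (by rw [hw0, hc0])
  · -- existence in [min β xstar, xstar]
    rcases le_or_gt xstar β with hle | hlt
    · have hmin : min xstar β = xstar := min_eq_left hle
      refine ⟨xstar, ⟨min_le_right _ _, le_refl _⟩, ?_⟩
      rw [hW, hmin, hx_eq]; ring
    · -- reuse the Ioo zero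
      have hmin : min xstar β = β := min_eq_right hlt.le
      obtain ⟨h1, h2⟩ := hkey β hβ xstar hx_mem hlt
      have hba : (0:ℝ) < xstar - β := sub_pos.2 hlt
      set s := (g xstar - g β) / (xstar - β) with hs
      have hgs : g xstar - g β = s * (xstar - β) := by rw [hs, div_mul_cancel₀ _ hba.ne']
      have hWβ : 0 < W β := by
        rw [hW, hmin]
        have : lam < g' β := by rw [← hx_eq]; linarith
        nlinarith [hβ.1]
      have hWx : W xstar < 0 := by
        rw [hW, hmin, hx_eq]
        have : lam < s := by rw [← hx_eq]; linarith
        nlinarith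
      have hIcc : Icc β xstar ⊆ Ioo (0:ℝ) 1 := fun y hy =>
        ⟨lt_of_lt_of_le hβ.1 hy.1, lt_of_le_of_lt hy.2 hx_mem.2⟩
      have hWc : ContinuousOn W (Icc β xstar) := by
        have : ContinuousOn (fun w => -g w + w * g' w +
            (g (min xstar β) - lam * min xstar β)) (Icc β xstar) :=
          (((hg_cont.mono (fun y hy => hsub (hIcc hy))).neg).add
            (continuousOn_id.mul (hg'_cont.mono hIcc))).add continuousOn_const
        exact this.congr fun y _ => hW y
      obtain ⟨c, hc, hc0⟩ := intermediate_value_Icc' hlt.le hWc ⟨hWx.le, hWβ.le⟩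
      exact ⟨c, ⟨le_trans (min_le_left _ _) hc.1, hc.2⟩, hc0⟩
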